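/- Suppose Assumption 2 holds, B_f is irreducible, and ρ(D_f^{-1}B_f) > 1. Then there exists z̃ = (x̃, w̃) ∈ ℝ^{n+m} with z̃ ≫ 0, x̃_i < 1 for every i ∈ {1,…,n}, and (−D_f + (I − X(z̃)) B_f) z̃ = 0; i.e., the layered networked SIWS model has a strictly positive (endemic) equilibrium lying in 𝒟. -/

import Mathlib

open Matrix

variable {n m : ℕ}

/-- The block matrix `B_f = [[B, B_w],[C_w, A_w − diag A_w]]`. -/
def BfM (B : Matrix (Fin n) (Fin n) ℝ) (Bw : Matrix (Fin n) (Fin m) ℝ)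
    (Cw : Matrix (Fin m) (Fin n) ℝ) (Aw : Matrix (Fin m) (Fin m) ℝ) :
    Matrix (Fin n ⊕ Fin m) (Fin n ⊕ Fin m) ℝ :=
  Matrix.fromBlocks B Bw Cw (Aw - Matrix.diagonal (fun j => Aw j j))

/-- The block diagonal matrix `D_f = blockdiag(D, D_w − diag A_w)`. -/
def DfM (δ : Fin n → ℝ) (δw : Fin m → ℝ) (Aw : Matrix (Fin m) (Fin m) ℝ) :
    Matrix (Fin n ⊕ Fin m) (Fin n ⊕ Fin m) ℝ :=
  Matrix.fromBlocks (Matrix.diagonal δ) 0 0 (Matrix.diagonal (fun j => δw j - Aw j j))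

/-- `X(z) = diag(x_1,…,x_n,0,…,0)` for `z = (x,w)`. -/
def XzM (z : Fin n ⊕ Fin m → ℝ) :
    Matrix (Fin n ⊕ Fin m) (Fin n ⊕ Fin m) ℝ :=
  Matrix.diagonal (Sum.elim (fun a => z (Sum.inl a)) (fun _ => (0:ℝ)))

/-- A (nonnegative) square matrix is irreducible if for every pair of indices `i, j`
there is `k ≥ 1` with `(M^k) i j > 0`. -/
def MatIrred {N : Type*} [Fintype N] [DecidableEq N] (M : Matrix N N ℝ) : Prop :=
  ∀ i j, ∃ k : ℕ, 1 ≤ k ∧ 0 < (M ^ k) i j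

/-- The spectral radius of a real matrix: the supremum of the moduli of its
complex eigenvalues. -/
noncomputable def specRad {N : Type*} [Fintype N] [DecidableEq N] (M : Matrix N N ℝ) : ENNReal :=
  spectralRadius ℂ (M.map (algebraMap ℝ ℂ))


/-- Tarski-type fixed point on an order interval in `ι → ℝ`. -/
lemma tarski_interval {ι : Type*} [Fintype ι] (T : (ι → ℝ) → (ι → ℝ)) (l b : ι → ℝ)
    (hlb : l ≤ b)
    (hmono : ∀ z z', l ≤ z → z ≤ z' → z' ≤ b → T z ≤ T z')
    (hl : l ≤ T l) (hb : T b ≤ b) :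
    ∃ z, l ≤ z ∧ z ≤ b ∧ T z = z := by
  classical
  set S : Set (ι → ℝ) := {v | l ≤ v ∧ v ≤ b ∧ v ≤ T v} with hS
  have hlS : l ∈ S := ⟨le_rfl, hlb, hl⟩
  set z : ι → ℝ := fun i => sSup ((fun v => v i) '' S) with hz
  have hne : ∀ i, ((fun v => v i) '' S).Nonempty := fun i => ⟨l i, ⟨l, hlS, rfl⟩⟩
  have hbdd : ∀ i, BddAbove ((fun v => v i) '' S) := by
    intro i
    exact ⟨b i, by rintro _ ⟨v, hv, rfl⟩; exact hv.2.1 i⟩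
  have hmem_le : ∀ v ∈ S, v ≤ z := by
    intro v hv i
    exact le_csSup (hbdd i) ⟨v, hv, rfl⟩
  have hzb : z ≤ b := by
    intro i
    exact csSup_le (hne i) (by rintro _ ⟨v, hv, rfl⟩; exact hv.2.1 i)
  have hlz : l ≤ z := hmem_le l hlS
  have hzT : z ≤ T z := by
    intro i
    refine csSup_le (hne i) ?_
    rintro _ ⟨v, hv, rfl⟩
    exact le_trans (hv.2.2 i) (hmono v z hv.1 (hmem_le v hv) hzb i)
  have hTz_mem : T z ∈ S := by
    refine ⟨le_trans hl (hmono l z le_rfl hlz hzb), le_trans (hmono z b hlz hzb le_rfl) hb, ?_⟩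
    exact hmono z (T z) hlz hzT (le_trans (hmono z b hlz hzb le_rfl) hb)
  exact ⟨z, hlz, hzb, le_antisymm (hmem_le _ hTz_mem) hzT⟩

lemma exists_subsol {ι : Type*} [Fintype ι] [DecidableEq ι] [Nonempty ι]
    (d : ι → ℝ) (F : Matrix ι ι ℝ) (hd : ∀ i, 0 < d i) (hF : ∀ i j, 0 ≤ F i j)
    (hρ : 1 < spectralRadius ℂ
      (((Matrix.diagonal fun i => (d i)⁻¹) * F).map (algebraMap ℝ ℂ))) :
    ∃ (lam : ℝ) (u : ι → ℝ), 1 < lam ∧ (∀ i, 0 ≤ u i) ∧ u ≠ 0 ∧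
      ∀ i, lam * (d i * u i) ≤ (F *ᵥ u) i := by
  classical
  set A : Matrix ι ι ℂ := ((Matrix.diagonal fun i => (d i)⁻¹) * F).map (algebraMap ℝ ℂ) with hA
  rw [spectralRadius] at hρ
  obtain ⟨k, hk⟩ : ∃ k, 1 < ⨆ _ : k ∈ spectrum ℂ A, (‖k‖₊ : ENNReal) := lt_iSup_iff.mp hρ
  have hkmem : k ∈ spectrum ℂ A := by
    by_contra h
    simp [h] at hk
  have hk1 : 1 < ‖k‖ := by
    simp [hkmem] at hk
    exact_mod_cast hk
  -- get an eigenvector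
  have hdet : (Matrix.diagonal (fun _ : ι => k) - A).det = 0 := by
    have := spectrum.mem_iff.mp hkmem
    rw [Matrix.isUnit_iff_isUnit_det] at this
    · simpa using (not_not.mp fun hne => this (by
        have h2 : (algebraMap ℂ (Matrix ι ι ℂ) k - A).det ≠ 0 := by
          rw [Matrix.algebraMap_eq_diagonal]; exact hne
        exact isUnit_iff_ne_zero.mpr h2))
  obtain ⟨v, hv0, hveq⟩ := Matrix.exists_mulVec_eq_zero_iff.mpr hdet
  have heig : ∀ i, k * v i = (A *ᵥ v) i := by
    intro i
    have := congrFun hveq i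
    simp [Matrix.sub_mulVec, Matrix.mulVec_diagonal, sub_eq_zero] at this
    simpa using this
  set u : ι → ℝ := fun i => ‖v i‖ with hu
  refine ⟨‖k‖, u, hk1, fun i => norm_nonneg _, ?_, ?_⟩
  · intro h
    apply hv0
    funext i
    have : u i = 0 := congrFun h i
    simpa [hu, norm_eq_zero] using this
  · intro i
    have hAe : ∀ j, A i j = ((d i)⁻¹ * F i j : ℝ) := by
      intro j
      simp [hA, Matrix.map_apply, Matrix.diagonal_mul]
    have h1 : ‖k‖ * u i ≤ ∑ j, (d i)⁻¹ * F i j * u j := by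
      calc ‖k‖ * u i = ‖k * v i‖ := by rw [norm_mul]
        _ = ‖∑ j, A i j * v j‖ := by rw [heig i]; rfl
        _ ≤ ∑ j, ‖A i j * v j‖ := norm_sum_le _ _
        _ = ∑ j, (d i)⁻¹ * F i j * u j := by
            refine Finset.sum_congr rfl fun j _ => ?_
            rw [norm_mul, hAe j]
            congr 1
            rw [Complex.norm_real]
            exact abs_of_nonneg (mul_nonneg (inv_nonneg.mpr (hd i).le) (hF i j))
    have h2 : ∑ j, (d i)⁻¹ * F i j * u j = (d i)⁻¹ * (F *ᵥ u) i := by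
      rw [Matrix.mulVec, dotProduct, Finset.mul_sum]
      exact Finset.sum_congr rfl fun j _ => by ring
    rw [h2] at h1
    have h3 := mul_le_mul_of_nonneg_left h1 (hd i).le
    calc ‖k‖ * (d i * u i) = d i * (‖k‖ * u i) := by ring
      _ ≤ d i * ((d i)⁻¹ * (F *ᵥ u) i) := h3
      _ = (F *ᵥ u) i := by
          rw [← mul_assoc, mul_inv_cancel₀ (hd i).ne', one_mul]

/-- Monotonicity of `s ↦ s / (δ + χ s)`. -/
lemma gmono {s s' δ χ : ℝ} (h0 : 0 ≤ s) (hss : s ≤ s') (hδ : 0 < δ) (hχ : 0 ≤ χ) :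
    s / (δ + χ * s) ≤ s' / (δ + χ * s') := by
  have h1 : 0 < δ + χ * s := by positivity
  have h2 : 0 < δ + χ * s' := by
    have : 0 ≤ χ * s' := mul_nonneg hχ (h0.trans hss)
    linarith
  rw [div_le_div_iff₀ h1 h2]
  nlinarith

set_option maxHeartbeats 1600000 in
theorem siws_endemic_exists {n m : ℕ} (hn : 0 < n) (hm : 0 < m)
    (δ : Fin n → ℝ) (δw : Fin m → ℝ)
    (B : Matrix (Fin n) (Fin n) ℝ) (Bw : Matrix (Fin n) (Fin m) ℝ)
    (Cw : Matrix (Fin m) (Fin n) ℝ) (Aw : Matrix (Fin m) (Fin m) ℝ)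
    (hδ : ∀ i, 0 < δ i) (hδw : ∀ j, 0 < δw j)
    (hB : ∀ i j, 0 ≤ B i j) (hBw : ∀ i j, 0 ≤ Bw i j) (hCw : ∀ i j, 0 ≤ Cw i j)
    (hAw : ∀ i j, i ≠ j → 0 ≤ Aw i j)
    (hAwcol : ∀ j, ∑ i, Aw i j = 0)
    (hirr : MatIrred (BfM B Bw Cw Aw))
    (hρ : 1 < specRad ((DfM δ δw Aw)⁻¹ * BfM B Bw Cw Aw)) :
    ∃ zt : Fin n ⊕ Fin m → ℝ,
      (∀ i, 0 < zt i) ∧ (∀ i : Fin n, zt (Sum.inl i) < 1) ∧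
      (-(DfM δ δw Aw) +
        ((1 : Matrix (Fin n ⊕ Fin m) (Fin n ⊕ Fin m) ℝ) - XzM zt) * BfM B Bw Cw Aw) *ᵥ zt = 0 := by
  classical
  haveI hne1 : Nonempty (Fin n) := ⟨⟨0, hn⟩⟩
  haveI hne2 : Nonempty (Fin m) := ⟨⟨0, hm⟩⟩
  haveI hneι : Nonempty (Fin n ⊕ Fin m) := ⟨Sum.inl ⟨0, hn⟩⟩
  set F := BfM B Bw Cw Aw with hFdef
  -- diagonal entries of Aw are nonpositive
  have hajj : ∀ j, Aw j j ≤ 0 := by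
    intro j
    have h1 : ∑ i ∈ Finset.univ.erase j, Aw i j + Aw j j = 0 := by
      rw [Finset.sum_erase_add _ _ (Finset.mem_univ j)]; exact hAwcol j
    have h2 : 0 ≤ ∑ i ∈ Finset.univ.erase j, Aw i j :=
      Finset.sum_nonneg fun i hi => hAw i j (Finset.ne_of_mem_erase hi)
    linarith
  set d : Fin n ⊕ Fin m → ℝ := Sum.elim δ (fun j => δw j - Aw j j) with hddef
  have hd : ∀ i, 0 < d i := by
    rintro (i | j)
    · exact hδ i
    · have := hajj j; have := hδw j; simp only [hddef, Sum.elim_inr]; linarith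
  -- entries of F
  have hF : ∀ i j, 0 ≤ F i j := by
    rintro (i | i) (j | j)
    · simpa [hFdef, BfM] using hB i j
    · simpa [hFdef, BfM] using hBw i j
    · simpa [hFdef, BfM] using hCw i j
    · by_cases h : i = j
      · subst h; simp [hFdef, BfM, Matrix.sub_apply]
      · simpa [hFdef, BfM, Matrix.sub_apply, Matrix.diagonal_apply_ne' _ h, h]
          using hAw i j h
  -- the diagonal matrix Df
  have hDf : DfM δ δw Aw = Matrix.diagonal d := by
    rw [DfM, hddef, ← Matrix.fromBlocks_diagonal]
  have hDfinv : (DfM δ δw Aw)⁻¹ = Matrix.diagonal (fun i => (d i)⁻¹) := by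
    rw [hDf]
    refine Matrix.inv_eq_right_inv ?_
    rw [Matrix.diagonal_mul_diagonal]
    ext i j
    by_cases h : i = j
    · subst h
      simp [Matrix.diagonal_apply_eq, mul_inv_cancel₀ (hd i).ne', Matrix.one_apply_eq]
    · simp [Matrix.diagonal_apply_ne _ h, Matrix.one_apply_ne h]
  -- the subsolution from the spectral radius condition
  have hρ' : 1 < spectralRadius ℂ
      (((Matrix.diagonal fun i => (d i)⁻¹) * F).map (algebraMap ℝ ℂ)) := by
    rw [specRad, hDfinv] at hρ; exact hρ
  obtain ⟨lam, u, hlam, hu0, hune, hsub⟩ := exists_subsol d F hd hF hρ'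
  -- ### upper bound construction in the w-block
  set c : Fin m → ℝ := Cw *ᵥ (fun _ => (1:ℝ)) with hcdef
  have hc : ∀ j, 0 ≤ c j := by
    intro j
    show 0 ≤ ∑ a, Cw j a * 1
    exact Finset.sum_nonneg fun a _ => mul_nonneg (hCw j a) zero_le_one
  set dv : Fin m → ℝ := fun j => δw j - Aw j j with hdvdef
  have hdv : ∀ j, 0 < dv j := fun j => hd (Sum.inr j)
  set Q : Matrix (Fin m) (Fin m) ℝ :=
    Matrix.of (fun j k => F (Sum.inr j) (Sum.inr k) / dv k) with hQdef
  have hQ0 : ∀ j k, 0 ≤ Q j k := fun j k => div_nonneg (hF _ _) (hdv k).le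
  have hFsum : ∀ k, ∑ j, F (Sum.inr j) (Sum.inr k) = -Aw k k := by
    intro k
    have h1 : ∀ j, F (Sum.inr j) (Sum.inr k) = Aw j k - (if j = k then Aw j j else 0) := by
      intro j
      simp [hFdef, BfM, Matrix.sub_apply, Matrix.diagonal_apply]
    simp_rw [h1]
    rw [Finset.sum_sub_distrib, hAwcol k, Finset.sum_ite_eq' Finset.univ k (fun j => Aw j j)]
    simp
  have hcolQ : ∀ k, ∑ j, Q j k = (-Aw k k) / dv k := by
    intro k
    simp_rw [hQdef, Matrix.of_apply]
    rw [← Finset.sum_div, hFsum]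
  set θ : ℝ := Finset.univ.sup' Finset.univ_nonempty (fun k => (-Aw k k) / dv k) with hθdef
  have hθ0 : 0 ≤ θ := by
    rw [hθdef]
    refine le_trans ?_ (Finset.le_sup' _ (Finset.mem_univ (⟨0,hm⟩ : Fin m)))
    refine div_nonneg ?_ (hdv ⟨0,hm⟩).le
    linarith [hajj (⟨0,hm⟩ : Fin m)]
  have hθ1 : θ < 1 := by
    rw [hθdef, Finset.sup'_lt_iff]
    intro k _
    rw [div_lt_one (hdv k)]
    have := hδw k
    simp only [hdvdef]
    linarith
  have hcolθ : ∀ k, ∑ j, Q j k ≤ θ := by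
    intro k
    rw [hcolQ k, hθdef]
    exact Finset.le_sup' (fun k => (-Aw k k) / dv k) (Finset.mem_univ k)
  set e : Fin m → ℝ := fun j => c j + 1 with hedef
  have he1 : ∀ j, 1 ≤ e j := fun j => by simp only [hedef]; linarith [hc j]
  have he0 : ∀ j, 0 ≤ e j := fun j => le_trans zero_le_one (he1 j)
  have hQpow : ∀ p : ℕ, (∀ j, 0 ≤ ((Q ^ p) *ᵥ e) j) ∧
      ∑ j, ((Q ^ p) *ᵥ e) j ≤ θ ^ p * ∑ j, e j := by
    intro p
    induction p with
    | zero =>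
      constructor
      · intro j; rw [pow_zero, Matrix.one_mulVec]; exact he0 j
      · rw [pow_zero, Matrix.one_mulVec, pow_zero, one_mul]
    | succ p ih =>
      have hstep : (Q ^ (p+1)) *ᵥ e = Q *ᵥ ((Q ^ p) *ᵥ e) := by
        rw [Matrix.mulVec_mulVec, ← pow_succ']
      constructor
      · intro j
        rw [hstep]
        show 0 ≤ ∑ k, Q j k * ((Q ^ p) *ᵥ e) k
        exact Finset.sum_nonneg fun k _ => mul_nonneg (hQ0 j k) (ih.1 k)
      · rw [hstep]
        have h1 : ∑ j, (Q *ᵥ ((Q^p) *ᵥ e)) j = ∑ k, (∑ j, Q j k) * ((Q^p) *ᵥ e) k := by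
          simp_rw [Matrix.mulVec, dotProduct, Finset.sum_mul]
          exact Finset.sum_comm
        rw [h1]
        calc ∑ k, (∑ j, Q j k) * ((Q^p) *ᵥ e) k
            ≤ ∑ k, θ * ((Q^p) *ᵥ e) k :=
              Finset.sum_le_sum fun k _ => mul_le_mul_of_nonneg_right (hcolθ k) (ih.1 k)
          _ = θ * ∑ k, ((Q^p) *ᵥ e) k := by rw [Finset.mul_sum]
          _ ≤ θ * (θ^p * ∑ j, e j) := mul_le_mul_of_nonneg_left ih.2 hθ0
          _ = θ^(p+1) * ∑ j, e j := by ring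
  set S : ℝ := ∑ j, e j with hSdef
  have hS1 : 1 ≤ S := by
    calc (1:ℝ) ≤ e ⟨0,hm⟩ := he1 _
      _ ≤ S := Finset.single_le_sum (fun j _ => he0 j) (Finset.mem_univ _)
  obtain ⟨N, hN⟩ := exists_pow_lt_of_lt_one (show (0:ℝ) < 1/S by positivity) hθ1
  have hNS : ∀ p, N ≤ p → θ ^ p * S ≤ 1 := by
    intro p hp
    have h1 : θ^p ≤ θ^N := pow_le_pow_of_le_one hθ0 hθ1.le hp
    have h2 : θ^N * S < 1 := by
      have := mul_lt_mul_of_pos_right hN (show 0 < S by linarith)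
      rwa [one_div, inv_mul_cancel₀ (by linarith : S ≠ 0)] at this
    nlinarith [pow_nonneg hθ0 p]
  set y : Fin m → ℝ := fun j => ∑ p ∈ Finset.range (N+2), ((Q ^ p) *ᵥ e) j with hydef
  have hQy0 : ∀ j, (Q *ᵥ y) j = ∑ p ∈ Finset.range (N+2), ((Q ^ (p+1)) *ᵥ e) j := by
    intro j
    have h2 : (Q *ᵥ y) j = ∑ k, Q j k * y k := rfl
    rw [h2]
    calc ∑ k, Q j k * y k
        = ∑ k, ∑ p ∈ Finset.range (N+2), Q j k * ((Q^p) *ᵥ e) k := by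
          simp_rw [hydef, Finset.mul_sum]
      _ = ∑ p ∈ Finset.range (N+2), ∑ k, Q j k * ((Q^p) *ᵥ e) k := Finset.sum_comm
      _ = ∑ p ∈ Finset.range (N+2), ((Q^(p+1)) *ᵥ e) j := by
          refine Finset.sum_congr rfl fun p _ => ?_
          rw [show (Q^(p+1)) *ᵥ e = Q *ᵥ ((Q^p) *ᵥ e) by
            rw [Matrix.mulVec_mulVec, ← pow_succ']]
          rfl
  have hQy : ∀ j, (Q *ᵥ y) j = y j + ((Q^(N+2)) *ᵥ e) j - e j := by
    intro j
    rw [hQy0 j]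
    have h1 : ∑ p ∈ Finset.range (N+3), ((Q^p) *ᵥ e) j
        = ∑ p ∈ Finset.range (N+2), ((Q^(p+1)) *ᵥ e) j + ((Q^0) *ᵥ e) j :=
      Finset.sum_range_succ' _ _
    have h2 : ∑ p ∈ Finset.range (N+3), ((Q^p) *ᵥ e) j
        = ∑ p ∈ Finset.range (N+2), ((Q^p) *ᵥ e) j + ((Q^(N+2)) *ᵥ e) j :=
      Finset.sum_range_succ _ _
    have h3 : ((Q^0) *ᵥ e) j = e j := by rw [pow_zero, Matrix.one_mulVec]
    rw [h3] at h1
    rw [hydef]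
    linarith [h1, h2]
  have hQN2 : ∀ j, ((Q^(N+2)) *ᵥ e) j ≤ 1 := by
    intro j
    have h1 : ((Q^(N+2)) *ᵥ e) j ≤ ∑ i, ((Q^(N+2)) *ᵥ e) i :=
      Finset.single_le_sum (fun i _ => (hQpow (N+2)).1 i) (Finset.mem_univ j)
    have h2 := (hQpow (N+2)).2
    have h3 := hNS (N+2) (by omega)
    calc ((Q^(N+2)) *ᵥ e) j ≤ θ^(N+2) * S := by rw [hSdef] at *; linarith
      _ ≤ 1 := h3
  have hy_sub : ∀ j, c j + (Q *ᵥ y) j ≤ y j := by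
    intro j
    rw [hQy j]
    have := hQN2 j
    simp only [hedef]
    linarith
  have hy1 : ∀ j, 1 ≤ y j := by
    intro j
    have h1 : e j ≤ y j := by
      have h2 : ((Q^0) *ᵥ e) j ≤ ∑ p ∈ Finset.range (N+2), ((Q^p) *ᵥ e) j :=
        Finset.single_le_sum (fun p _ => (hQpow p).1 j) (by simp)
      rw [pow_zero, Matrix.one_mulVec] at h2
      exact h2
    linarith [he1 j]
  -- ### box endpoints and the monotone map T
  set bw : Fin m → ℝ := fun j => y j / dv j with hbwdef
  have hbw0 : ∀ j, 0 < bw j := fun j => div_pos (by linarith [hy1 j]) (hdv j)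
  set b : Fin n ⊕ Fin m → ℝ := Sum.elim (fun _ => (1:ℝ)) bw with hbdef
  have hb0 : ∀ i, 0 < b i := by
    rintro (i|j)
    · exact one_pos
    · exact hbw0 j
  set χ : Fin n ⊕ Fin m → ℝ := Sum.elim (fun _ => (1:ℝ)) (fun _ => 0) with hχdef
  have hχ0 : ∀ i, 0 ≤ χ i := by rintro (i|j) <;> simp [hχdef]
  have hχ1 : ∀ i, χ i ≤ 1 := by rintro (i|j) <;> simp [hχdef]
  set T : ((Fin n ⊕ Fin m) → ℝ) → ((Fin n ⊕ Fin m) → ℝ) :=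
    fun z i => (F *ᵥ z) i / (d i + χ i * (F *ᵥ z) i) with hTdef
  have hFv0 : ∀ z : (Fin n ⊕ Fin m) → ℝ, (∀ j, 0 ≤ z j) → ∀ i, 0 ≤ (F *ᵥ z) i := by
    intro z hz i
    show 0 ≤ ∑ j, F i j * z j
    exact Finset.sum_nonneg fun j _ => mul_nonneg (hF i j) (hz j)
  have hFvmono : ∀ z z' : (Fin n ⊕ Fin m) → ℝ, z ≤ z' → ∀ i, (F *ᵥ z) i ≤ (F *ᵥ z') i := by
    intro z z' hzz i
    show ∑ j, F i j * z j ≤ ∑ j, F i j * z' j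
    exact Finset.sum_le_sum fun j _ => mul_le_mul_of_nonneg_left (hzz j) (hF i j)
  -- ### the subsolution l = ε u
  set Umax : ℝ := Finset.univ.sup' Finset.univ_nonempty u with hUdef
  have hUmax : ∀ i, u i ≤ Umax := by
    intro i
    rw [hUdef]
    exact Finset.le_sup' u (Finset.mem_univ i)
  have hU0 : 0 ≤ Umax := le_trans (hu0 (Classical.arbitrary _)) (hUmax _)
  set bmin : ℝ := Finset.univ.inf' Finset.univ_nonempty b with hbmindef
  have hbmin : ∀ i, bmin ≤ b i := by
    intro i
    rw [hbmindef]
    exact Finset.inf'_le b (Finset.mem_univ i)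
  have hbmin0 : 0 < bmin := by
    rw [hbmindef, Finset.lt_inf'_iff]
    exact fun i _ => hb0 i
  have hlam0 : (0:ℝ) < lam := by linarith
  set m0 : ℝ := min ((lam - 1)/lam) bmin with hm0def
  have hm00 : 0 < m0 := lt_min (div_pos (by linarith) hlam0) hbmin0
  set ε : ℝ := m0 / (1 + Umax) with hεdef
  have hε0 : 0 < ε := div_pos hm00 (by linarith)
  have hεu : ∀ i, ε * u i ≤ m0 := by
    intro i
    have h1 : ε * u i ≤ ε * (1 + Umax) :=
      mul_le_mul_of_nonneg_left (by linarith [hUmax i]) hε0.le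
    rw [hεdef, div_mul_cancel₀ _ (by linarith : (1:ℝ) + Umax ≠ 0)] at h1
    exact h1
  set l : Fin n ⊕ Fin m → ℝ := fun i => ε * u i with hldef
  have hl0 : ∀ i, 0 ≤ l i := fun i => mul_nonneg hε0.le (hu0 i)
  have hlb : l ≤ b := by
    intro i
    calc l i ≤ m0 := hεu i
      _ ≤ bmin := min_le_right _ _
      _ ≤ b i := hbmin i
  have hFl : ∀ i, (F *ᵥ l) i = ε * (F *ᵥ u) i := by
    intro i
    show ∑ j, F i j * (ε * u j) = ε * ∑ j, F i j * u j
    rw [Finset.mul_sum]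
    exact Finset.sum_congr rfl fun j _ => by ring
  have hTl : l ≤ T l := by
    intro i
    have hs0 : 0 ≤ (F *ᵥ l) i := hFv0 l hl0 i
    have hs : lam * (d i * (ε * u i)) ≤ (F *ᵥ l) i := by
      have h1 := mul_le_mul_of_nonneg_left (hsub i) hε0.le
      rw [hFl i]
      calc lam * (d i * (ε * u i)) = ε * (lam * (d i * u i)) := by ring
        _ ≤ ε * (F *ᵥ u) i := h1
    have ha0 : 0 ≤ ε * u i := hl0 i
    have ha : lam * (ε * u i) ≤ lam - 1 := by
      have h2 : ε * u i ≤ (lam - 1)/lam := le_trans (hεu i) (min_le_left _ _)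
      calc lam * (ε * u i) ≤ lam * ((lam - 1)/lam) :=
            mul_le_mul_of_nonneg_left h2 hlam0.le
        _ = lam - 1 := by field_simp
    have hs00 : 0 ≤ lam * (d i * (ε * u i)) := mul_nonneg hlam0.le (mul_nonneg (hd i).le ha0)
    have step1 : lam * (d i * (ε * u i)) / (d i + χ i * (lam * (d i * (ε * u i))))
        ≤ (F *ᵥ l) i / (d i + χ i * (F *ᵥ l) i) := gmono hs00 hs (hd i) (hχ0 i)
    have step2 : l i ≤ lam * (d i * (ε * u i)) / (d i + χ i * (lam * (d i * (ε * u i)))) := by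
      have hden : 0 < d i + χ i * (lam * (d i * (ε * u i))) :=
        add_pos_of_pos_of_nonneg (hd i) (mul_nonneg (hχ0 i) hs00)
      show ε * u i ≤ lam * (d i * (ε * u i)) / (d i + χ i * (lam * (d i * (ε * u i))))
      rw [le_div_iff₀ hden]
      have hc1 : χ i * (lam * (ε * u i)) ≤ lam - 1 := by
        calc χ i * (lam * (ε * u i)) ≤ 1 * (lam * (ε * u i)) :=
              mul_le_mul_of_nonneg_right (hχ1 i) (mul_nonneg hlam0.le ha0)
          _ = lam * (ε * u i) := by ring
          _ ≤ lam - 1 := ha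
      have := hd i
      nlinarith [mul_nonneg ha0 (hd i).le, mul_le_mul_of_nonneg_right hc1
        (mul_nonneg ha0 (hd i).le)]
    exact le_trans step2 step1
  have hTb : T b ≤ b := by
    rintro (i|j)
    · have hs0 : 0 ≤ (F *ᵥ b) (Sum.inl i) := hFv0 b (fun j => (hb0 j).le) _
      show (F *ᵥ b) (Sum.inl i) / (d (Sum.inl i) + χ (Sum.inl i) * (F *ᵥ b) (Sum.inl i)) ≤ b (Sum.inl i)
      have hχi : χ (Sum.inl i) = 1 := rfl
      have hbi : b (Sum.inl i) = 1 := rfl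
      rw [hχi, hbi, one_mul, div_le_one (by linarith [hd (Sum.inl i)])]
      linarith [hd (Sum.inl i)]
    · have hFb : (F *ᵥ b) (Sum.inr j) = c j + (Q *ᵥ y) j := by
        have h1 : ∑ i, F (Sum.inr j) (Sum.inl i) * b (Sum.inl i) = c j := by
          have hcw : ∀ i : Fin n, F (Sum.inr j) (Sum.inl i) = Cw j i := fun i => by
            simp [hFdef, BfM]
          show ∑ i, F (Sum.inr j) (Sum.inl i) * 1 = ∑ i, Cw j i * 1
          exact Finset.sum_congr rfl fun i _ => by rw [hcw i]
        have h2 : ∑ k, F (Sum.inr j) (Sum.inr k) * b (Sum.inr k) = (Q *ᵥ y) j := by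
          show ∑ k, F (Sum.inr j) (Sum.inr k) * (y k / dv k) = ∑ k, Q j k * y k
          refine Finset.sum_congr rfl fun k _ => ?_
          show F (Sum.inr j) (Sum.inr k) * (y k / dv k)
            = F (Sum.inr j) (Sum.inr k) / dv k * y k
          ring
        show ∑ l, F (Sum.inr j) l * b l = c j + (Q *ᵥ y) j
        rw [Fintype.sum_sum_type, h1, h2]
      show (F *ᵥ b) (Sum.inr j) / (d (Sum.inr j) + χ (Sum.inr j) * (F *ᵥ b) (Sum.inr j)) ≤ b (Sum.inr j)
      have hχj : χ (Sum.inr j) = 0 := rfl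
      have hbj : b (Sum.inr j) = bw j := rfl
      have hdj : d (Sum.inr j) = dv j := rfl
      rw [hχj, hbj, hdj, zero_mul, add_zero, hFb, hbwdef]
      exact div_le_div_of_nonneg_right (hy_sub j) (hdv j).le
  -- ### fixed point via Tarski
  have hmono : ∀ z z', l ≤ z → z ≤ z' → z' ≤ b → T z ≤ T z' := by
    intro z z' h1 h2 _ i
    have hz0 : ∀ j, 0 ≤ z j := fun j => le_trans (hl0 j) (h1 j)
    exact gmono (hFv0 z hz0 i) (hFvmono z z' h2 i) (hd i) (hχ0 i)
  obtain ⟨z, hlz, hzb, hTz⟩ := tarski_interval T l b hlb hmono hTl hTb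
  have hz0 : ∀ i, 0 ≤ z i := fun i => le_trans (hl0 i) (hlz i)
  have hs0 : ∀ i, 0 ≤ (F *ᵥ z) i := hFv0 z hz0
  have hden : ∀ i, 0 < d i + χ i * (F *ᵥ z) i := fun i =>
    add_pos_of_pos_of_nonneg (hd i) (mul_nonneg (hχ0 i) (hs0 i))
  have hkey : ∀ i, z i * (d i + χ i * (F *ᵥ z) i) = (F *ᵥ z) i := by
    intro i
    have h1 : (F *ᵥ z) i / (d i + χ i * (F *ᵥ z) i) = z i := congrFun hTz i
    exact ((div_eq_iff (hden i).ne').mp h1).symm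
  -- zero propagation via irreducibility
  have hzero : ∀ i, z i = 0 → (F *ᵥ z) i = 0 := by
    intro i h
    have h1 := hkey i
    rw [h, zero_mul] at h1
    exact h1.symm
  have hFk0 : ∀ k : ℕ, ∀ i j, 0 ≤ (F ^ k) i j := by
    intro k
    induction k with
    | zero =>
      intro i j
      by_cases h : i = j <;> simp [pow_zero, Matrix.one_apply, h]
    | succ k ih =>
      intro i j
      rw [pow_succ, Matrix.mul_apply]
      exact Finset.sum_nonneg fun l _ => mul_nonneg (ih i l) (hF l j)
  have hprop : ∀ k : ℕ, ∀ i, z i = 0 → ((F ^ k) *ᵥ z) i = 0 := by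
    intro k
    induction k with
    | zero =>
      intro i h
      rw [pow_zero, Matrix.one_mulVec]
      exact h
    | succ k ih =>
      intro i h
      have hFz : (F *ᵥ z) i = 0 := hzero i h
      have hterm : ∀ l0, F i l0 * z l0 = 0 := by
        have hsum : ∑ l0, F i l0 * z l0 = 0 := hFz
        intro l0
        exact (Finset.sum_eq_zero_iff_of_nonneg
          (fun l0 _ => mul_nonneg (hF i l0) (hz0 l0))).mp hsum l0 (Finset.mem_univ l0)
      have hstep : (F ^ (k+1)) *ᵥ z = F *ᵥ ((F ^ k) *ᵥ z) := by
        rw [Matrix.mulVec_mulVec, ← pow_succ']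
      rw [hstep]
      show ∑ l0, F i l0 * ((F ^ k) *ᵥ z) l0 = 0
      refine Finset.sum_eq_zero fun l0 _ => ?_
      by_cases hF0 : F i l0 = 0
      · rw [hF0, zero_mul]
      · have hzl : z l0 = 0 := by
          rcases mul_eq_zero.mp (hterm l0) with h' | h'
          · exact absurd h' hF0
          · exact h'
        rw [ih l0 hzl, mul_zero]
  have hi0ex : ∃ i0, 0 < z i0 := by
    have h1 : ∃ i0, u i0 ≠ 0 := by
      by_contra hcon
      push_neg at hcon
      exact hune (funext fun i => hcon i)
    obtain ⟨i0, hi0⟩ := h1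
    refine ⟨i0, lt_of_lt_of_le ?_ (hlz i0)⟩
    exact mul_pos hε0 (lt_of_le_of_ne (hu0 i0) (Ne.symm hi0))
  have hzpos : ∀ i, 0 < z i := by
    intro i
    rcases lt_or_eq_of_le (hz0 i) with h | h
    · exact h
    obtain ⟨i0, hz_i0⟩ := hi0ex
    obtain ⟨k, _, hkpos⟩ := hirr i i0
    have h1 : ((F ^ k) *ᵥ z) i = 0 := hprop k i h.symm
    have h2 : (F ^ k) i i0 * z i0 ≤ ((F ^ k) *ᵥ z) i := by
      show (F ^ k) i i0 * z i0 ≤ ∑ l0, (F ^ k) i l0 * z l0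
      exact Finset.single_le_sum (fun l0 _ => mul_nonneg (hFk0 k i l0) (hz0 l0))
        (Finset.mem_univ i0)
    nlinarith [mul_pos hkpos hz_i0]
  have hxlt : ∀ i : Fin n, z (Sum.inl i) < 1 := by
    intro i
    have h1 := hkey (Sum.inl i)
    have hχi : χ (Sum.inl i) = 1 := rfl
    have hdi : 0 < d (Sum.inl i) := hd _
    rw [hχi, one_mul] at h1
    by_contra hcon
    push_neg at hcon
    have h2 : d (Sum.inl i) + (F *ᵥ z) (Sum.inl i)
        ≤ z (Sum.inl i) * (d (Sum.inl i) + (F *ᵥ z) (Sum.inl i)) :=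
      le_mul_of_one_le_left (by linarith [hs0 (Sum.inl i)]) hcon
    linarith [hs0 (Sum.inl i)]
  -- ### the equilibrium equation
  refine ⟨z, hzpos, hxlt, ?_⟩
  have hXz : XzM z = Matrix.diagonal (fun i => χ i * z i) := by
    have hXz0 : XzM z
        = Matrix.diagonal (Sum.elim (fun a => z (Sum.inl a)) (fun _ => (0:ℝ))) := rfl
    rw [hXz0]
    refine congrArg Matrix.diagonal (funext fun i => ?_)
    rcases i with i | j
    · show z (Sum.inl i) = χ (Sum.inl i) * z (Sum.inl i)
      rw [show χ (Sum.inl i) = (1:ℝ) from rfl, one_mul]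
    · show (0:ℝ) = χ (Sum.inr j) * z (Sum.inr j)
      rw [show χ (Sum.inr j) = (0:ℝ) from rfl, zero_mul]
  funext i
  have hexp : ((-(DfM δ δw Aw) +
      ((1 : Matrix (Fin n ⊕ Fin m) (Fin n ⊕ Fin m) ℝ) - XzM z) * F) *ᵥ z) i
      = -(d i * z i) + ((F *ᵥ z) i - χ i * z i * (F *ᵥ z) i) := by
    rw [hDf, hXz, Matrix.add_mulVec, Matrix.neg_mulVec, Matrix.sub_mul, one_mul,
      Matrix.sub_mulVec, ← Matrix.mulVec_mulVec]
    show -(Matrix.diagonal d *ᵥ z) i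
        + ((F *ᵥ z) i - (Matrix.diagonal (fun i => χ i * z i) *ᵥ (F *ᵥ z)) i) = _
    rw [Matrix.mulVec_diagonal, Matrix.mulVec_diagonal]
  show ((-(DfM δ δw Aw) +
      ((1 : Matrix (Fin n ⊕ Fin m) (Fin n ⊕ Fin m) ℝ) - XzM z) * F) *ᵥ z) i
      = (0 : (Fin n ⊕ Fin m) → ℝ) i
  rw [hexp, Pi.zero_apply]
  have h1 := hkey i
  ring_nf
  ring_nf at h1
  linarith [h1]
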